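/- Let M ∈ ℝ^{D×D} be a symmetric positive semidefinite matrix, let x ∈ ℝ^D, let x_j ∈ ℝ^D, and let {x_i}_{i ∈ I} be a finite family of points in ℝ^D such that M(x_i − x_j) ≠ 0 for every i ∈ I. If δ ∈ ℝ^D satisfies d_M(x + δ, x_j) ≤ d_M(x + δ, x_i) for all i ∈ I, then ‖δ‖₂ ≥ max over i ∈ I of [ε̃(x_i, x_j, x; M)]₊, where ε̃(x⁺, x⁻, x; M) = (d_M(x, x⁻) − d_M(x, x⁺)) / (2 ‖M(x⁺ − x⁻)‖₂). -/

import Mathlib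

open Matrix

/-- Mahalanobis (squared) distance `d_M(x, x') = (x - x')ᵀ M (x - x')`. -/
noncomputable def mah {D : ℕ} (M : Matrix (Fin D) (Fin D) ℝ) (x x' : Fin D → ℝ) : ℝ :=
  (x - x') ⬝ᵥ M.mulVec (x - x')

/-- Euclidean norm `‖v‖₂` on `Fin D → ℝ`. -/
noncomputable def eucNorm {D : ℕ} (v : Fin D → ℝ) : ℝ :=
  Real.sqrt (v ⬝ᵥ v)


/-- `ε̃(x⁺, x⁻, x; M) = (d_M(x, x⁻) − d_M(x, x⁺)) / (2‖M(x⁺ − x⁻)‖₂)`. -/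
noncomputable def epsTilde {D : ℕ} (M : Matrix (Fin D) (Fin D) ℝ) (xp xm x : Fin D → ℝ) : ℝ :=
  (mah M x xm - mah M x xp) / (2 * eucNorm (M.mulVec (xp - xm)))


lemma euc_cs {D : ℕ} (a b : Fin D → ℝ) : a ⬝ᵥ b ≤ eucNorm a * eucNorm b := by
  have h := real_inner_le_norm (F := EuclideanSpace ℝ (Fin D)) (WithLp.toLp 2 a) (WithLp.toLp 2 b)
  simpa [eucNorm, dotProduct, EuclideanSpace.norm_eq, PiLp.inner_apply, RCLike.inner_apply,
    pow_two, mul_comm] using h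

lemma euc_nonneg {D : ℕ} (v : Fin D → ℝ) : 0 ≤ eucNorm v := Real.sqrt_nonneg _

lemma euc_neg {D : ℕ} (v : Fin D → ℝ) : eucNorm (-v) = eucNorm v := by
  simp [eucNorm]

lemma dot_sym {D : ℕ} {M : Matrix (Fin D) (Fin D) ℝ} (hs : Mᵀ = M) (u v : Fin D → ℝ) :
    u ⬝ᵥ M.mulVec v = v ⬝ᵥ M.mulVec u := by
  rw [dotProduct_mulVec, ← mulVec_transpose, hs, dotProduct_comm]

lemma mah_expand {D : ℕ} {M : Matrix (Fin D) (Fin D) ℝ} (hs : Mᵀ = M)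
    (x δ a : Fin D → ℝ) :
    mah M (x + δ) a = mah M x a + 2 * (δ ⬝ᵥ M.mulVec (x - a)) + δ ⬝ᵥ M.mulVec δ := by
  have hx : x + δ - a = (x - a) + δ := by abel
  rw [mah, hx, mah]
  rw [Matrix.mulVec_add, dotProduct_add, add_dotProduct, add_dotProduct,
    dot_sym hs (x - a) δ]
  ring

/-- if `δ` satisfies `d_M(x + δ, x_j) ≤ d_M(x + δ, x_i)` for all `i ∈ I`, then
`‖δ‖₂ ≥ max_{i ∈ I} [ε̃(x_i, x_j, x; M)]₊`. -/
theorem perturbation_lower_bound_max {D : ℕ} {ι : Type*}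
    (M : Matrix (Fin D) (Fin D) ℝ) (hM : M.PosSemidef)
    (x xj : Fin D → ℝ) (I : Finset ι) (hI : I.Nonempty) (xi : ι → Fin D → ℝ)
    (hMx : ∀ i ∈ I, M.mulVec (xi i - xj) ≠ 0)
    (δ : Fin D → ℝ)
    (hδ : ∀ i ∈ I, mah M (x + δ) xj ≤ mah M (x + δ) (xi i)) :
    I.sup' hI (fun i => max (epsTilde M (xi i) xj x) 0) ≤ eucNorm δ := by
  have hs : Mᵀ = M := by
    have := hM.1
    simpa [Matrix.IsHermitian, Matrix.conjTranspose_eq_transpose_of_trivial] using this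
  rw [Finset.sup'_le_iff]
  intro i hi
  rw [max_le_iff]
  refine ⟨?_, euc_nonneg δ⟩
  set w := M.mulVec (xi i - xj) with hw
  have hwpos : 0 < eucNorm w := by
    apply Real.sqrt_pos.2
    have hnn : 0 ≤ w ⬝ᵥ w := Finset.sum_nonneg fun j _ => mul_self_nonneg _
    rcases lt_or_eq_of_le hnn with h | h
    · exact h
    · exact absurd (dotProduct_self_eq_zero.1 h.symm) (hMx i hi)
  have hnum : mah M x xj - mah M x (xi i) ≤ 2 * (eucNorm δ * eucNorm w) := by
    have h1 := hδ i hi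
    rw [mah_expand hs x δ xj, mah_expand hs x δ (xi i)] at h1
    have h2 : mah M x xj - mah M x (xi i) ≤ 2 * (δ ⬝ᵥ M.mulVec (xj - xi i)) := by
      have : M.mulVec (xj - xi i) = M.mulVec (x - xi i) - M.mulVec (x - xj) := by
        rw [← Matrix.mulVec_sub]; congr 1; abel
      rw [this, dotProduct_sub]
      linarith
    have h3 : δ ⬝ᵥ M.mulVec (xj - xi i) ≤ eucNorm δ * eucNorm w := by
      have := euc_cs δ (M.mulVec (xj - xi i))
      have hneg : M.mulVec (xj - xi i) = -w := by
        rw [hw, ← Matrix.mulVec_neg]; congr 1; abel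
      rw [hneg, euc_neg] at this; rw [hneg]; exact this
    linarith
  rw [epsTilde, div_le_iff₀ (by positivity)]
  calc mah M x xj - mah M x (xi i) ≤ 2 * (eucNorm δ * eucNorm w) := hnum
    _ = eucNorm δ * (2 * eucNorm w) := by ring
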